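/- For n ≥ 2 and k ≥ 0, let W_k = S^k(ℂ^n) be the k-th symmetric power of the defining representation of sl_n(ℂ) and let w_k ∈ W_k be the k-th symmetric power of the basis vector u_n (the lowest weight vector: e_{ab} w_k = 0 for all a > b). The operators x_a := e_{n−a,n} (1 ≤ a ≤ n−1) acting on W_k commute, the module map ℂ[x_1,…,x_{n−1}] → W_k, P ↦ P·w_k, is surjective, and its kernel is the ideal generated by all monomials x_1^{ν_1}⋯x_{n−1}^{ν_{n−1}} of total degree k+1. Hence W_k ≅ V_k^{(n)} as ℂ[x_1,…,x_{n−1}]-modules, with w_k corresponding to the class of 1. -/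

import Mathlib

open MvPolynomial

noncomputable section

/-- The operator `x_a = e_{n-a,n}` acting on `S^k(ℂⁿ)`, realized as polynomials in `n`
variables (with `u_j ↔ X_j`), by the derivation `x_{n-a} ∂/∂x_n`. -/
def symX (n : ℕ) (a : Fin (n - 1)) : Module.End ℂ (MvPolynomial (Fin n) ℂ) :=
  (LinearMap.mulLeft ℂ (X (⟨n - 2 - a.val, by have := a.isLt; omega⟩ : Fin n) :
      MvPolynomial (Fin n) ℂ)).comp
    (pderiv (⟨n - 1, by have := a.isLt; omega⟩ : Fin n)).toLinearMap

/-- Evaluation of a polynomial `P ∈ ℂ[x_1,…,x_{n-1}]` at the commuting operators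
`x_1, …, x_{n-1}`, giving the module action of `ℂ[x_1,…,x_{n-1}]` on `S^k(ℂⁿ)`. -/
def symAct (n : ℕ) (P : MvPolynomial (Fin (n - 1)) ℂ) :
    Module.End ℂ (MvPolynomial (Fin n) ℂ) :=
  ∑ ν ∈ P.support, P.coeff ν • (List.ofFn fun a : Fin (n - 1) => symX n a ^ ν a).prod

/-- The ideal of `ℂ[x_1,…,x_{n-1}]` generated by all monomials of total degree `k+1`
(this is `J_k^{(n)}`). -/
def Jtop (n k : ℕ) : Ideal (MvPolynomial (Fin (n - 1)) ℂ) :=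
  Ideal.span {u | ∃ ν : Fin (n - 1) → ℕ, (∑ a, ν a) = k + 1 ∧ u = ∏ a, X a ^ ν a}

namespace SymAux

variable {n : ℕ}

def embA (n : ℕ) (a : Fin (n - 1)) : Fin n := ⟨n - 2 - a.val, by have := a.isLt; omega⟩

def lastN (n : ℕ) (hn : 2 ≤ n) : Fin n := ⟨n - 1, by have := hn; omega⟩

variable (hn : 2 ≤ n)

lemma embA_ne_last (a : Fin (n - 1)) : embA n a ≠ lastN n hn := by
  have ha := a.isLt
  simp only [embA, lastN, Fin.ne_iff_vne]
  omega

lemma embA_inj : Function.Injective (embA n) := by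
  intro a b hab
  have ha := a.isLt; have hb := b.isLt
  simp only [embA, Fin.mk.injEq] at hab
  ext; omega

lemma symX_apply (a : Fin (n - 1)) (f : MvPolynomial (Fin n) ℂ) :
    symX n a f = X (embA n a) * pderiv (lastN n hn) f := rfl

lemma symX_comm (a b : Fin (n - 1)) : symX n a * symX n b = symX n b * symX n a := by
  have hn : 2 ≤ n := by have := a.isLt; omega
  apply LinearMap.ext
  intro f
  simp only [Module.End.mul_apply, symX_apply hn]
  rw [pderiv_mul, pderiv_X_of_ne (embA_ne_last hn b), pderiv_mul,
    pderiv_X_of_ne (embA_ne_last hn a)]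
  ring

lemma nat_mul_descFactorial_pred (m e : ℕ) :
    m * (m - 1).descFactorial e = m.descFactorial (e + 1) := by
  cases m with
  | zero => simp [Nat.zero_descFactorial_succ]
  | succ t => simpa using (Nat.succ_descFactorial_succ t e).symm

lemma descFactorial_add' (m d₁ d₂ : ℕ) :
    m.descFactorial (d₁ + d₂) = m.descFactorial d₁ * (m - d₁).descFactorial d₂ := by
  induction d₂ with
  | zero => simp
  | succ e ih =>
      rw [← Nat.add_assoc, Nat.descFactorial_succ, ih, Nat.descFactorial_succ,
        Nat.sub_sub]
      ring

lemma symX_apply_monomial (a : Fin (n - 1)) (s : Fin n →₀ ℕ) (c : ℂ) :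
    symX n a (monomial s c) =
      monomial (s - Finsupp.single (lastN n hn) 1 + Finsupp.single (embA n a) 1)
        (c * (s (lastN n hn))) := by
  rw [symX_apply hn, pderiv_monomial, X, monomial_mul, one_mul, add_comm]

lemma symX_pow_apply_monomial (a : Fin (n - 1)) (e : ℕ) (s : Fin n →₀ ℕ) (c : ℂ) :
    (symX n a ^ e) (monomial s c) =
      monomial (s - Finsupp.single (lastN n hn) e + Finsupp.single (embA n a) e)
        (c * ((s (lastN n hn)).descFactorial e)) := by
  induction e generalizing s c with
  | zero => simp
  | succ e ih =>
      rw [pow_succ, Module.End.mul_apply, symX_apply_monomial hn, ih]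
      have hne : ¬ (embA n a = lastN n hn) := embA_ne_last hn a
      have hexp : ((s - Finsupp.single (lastN n hn) 1 + Finsupp.single (embA n a) 1)
            - Finsupp.single (lastN n hn) e + Finsupp.single (embA n a) e)
          = s - Finsupp.single (lastN n hn) (e + 1) + Finsupp.single (embA n a) (e + 1) := by
        ext b
        simp only [Finsupp.add_apply, Finsupp.tsub_apply, Finsupp.single_apply]
        split_ifs with h1 h2 <;>
          first
          | omega
          | exact absurd (h2.trans h1.symm) hne
      have hco : s (lastN n hn) - 1 =
          ((s - Finsupp.single (lastN n hn) 1 + Finsupp.single (embA n a) 1) : Fin n →₀ ℕ)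
            (lastN n hn) := by
        simp [Finsupp.single_apply, hne]
      rw [hexp, ← hco, mul_assoc, ← Nat.cast_mul, nat_mul_descFactorial_pred]

lemma sum_singles_apply (b : Fin n) (M : List (Fin (n - 1) × ℕ)) :
    ((M.map fun q => Finsupp.single (embA n q.1) q.2).sum : Fin n →₀ ℕ) b
      = (M.map fun q => if embA n q.1 = b then q.2 else 0).sum := by
  induction M with
  | nil => simp
  | cons q M ih =>
      simp only [List.map_cons, List.sum_cons, Finsupp.add_apply, ih, Finsupp.single_apply]

lemma list_prod_apply_monomial (L : List (Fin (n - 1) × ℕ)) (s : Fin n →₀ ℕ) (c : ℂ) :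
    ((L.map fun p => symX n p.1 ^ p.2).prod) (monomial s c) =
      monomial (s - Finsupp.single (lastN n hn) (L.map Prod.snd).sum
          + (L.map fun p => Finsupp.single (embA n p.1) p.2).sum)
        (c * ((s (lastN n hn)).descFactorial (L.map Prod.snd).sum)) := by
  induction L with
  | nil => simp
  | cons p L ih =>
      have hS0 : ((L.map fun q => if embA n q.1 = lastN n hn then q.2 else 0).sum) = 0 := by
        apply List.sum_eq_zero
        intro x hx
        simp only [List.mem_map] at hx
        obtain ⟨q, hq, rfl⟩ := hx
        simp [embA_ne_last hn q.1]
      rw [List.map_cons, List.prod_cons, Module.End.mul_apply, ih,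
        symX_pow_apply_monomial hn]
      have hsl : ((s - Finsupp.single (lastN n hn) (L.map Prod.snd).sum
            + (L.map fun p => Finsupp.single (embA n p.1) p.2).sum) : Fin n →₀ ℕ)
            (lastN n hn) = s (lastN n hn) - (L.map Prod.snd).sum := by
        simp [sum_singles_apply, hS0, Finsupp.single_apply]
      have hexp : (s - Finsupp.single (lastN n hn) (L.map Prod.snd).sum
            + (L.map fun q => Finsupp.single (embA n q.1) q.2).sum)
            - Finsupp.single (lastN n hn) p.2 + Finsupp.single (embA n p.1) p.2
          = s - Finsupp.single (lastN n hn) ((p :: L).map Prod.snd).sum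
            + ((p :: L).map fun q => Finsupp.single (embA n q.1) q.2).sum := by
        ext b
        simp only [Finsupp.add_apply, Finsupp.tsub_apply, sum_singles_apply,
          Finsupp.single_apply, List.map_cons, List.sum_cons]
        by_cases hb : lastN n hn = b
        · rw [← hb, hS0]
          simp only [eq_self_iff_true, if_true, if_neg (embA_ne_last hn p.1)]
          omega
        · simp only [if_neg hb]
          omega
      rw [hexp, hsl, mul_assoc, ← Nat.cast_mul, ← descFactorial_add',
        List.map_cons, List.sum_cons, Nat.add_comm]

def Tm (n k : ℕ) (hn : 2 ≤ n) (ν : Fin (n - 1) → ℕ) : Fin n →₀ ℕ :=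
  Finsupp.single (lastN n hn) (k - ∑ a, ν a) + ∑ a, Finsupp.single (embA n a) (ν a)

lemma single_sub_single (b : Fin n) (x y : ℕ) :
    Finsupp.single b x - Finsupp.single b y = Finsupp.single b (x - y) := by
  ext b'
  by_cases hb : b = b' <;> simp [Finsupp.single_apply, hb]

lemma ofFn_prod_apply_Xk (k : ℕ) (ν : Fin (n - 1) → ℕ) :
    (List.ofFn fun a => symX n a ^ ν a).prod ((X (lastN n hn) : MvPolynomial (Fin n) ℂ) ^ k)
      = monomial (Tm n k hn ν) ((k.descFactorial (∑ a, ν a) : ℂ)) := by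
  have h := list_prod_apply_monomial hn (List.ofFn fun a => (a, ν a))
    (Finsupp.single (lastN n hn) k) 1
  simp only [List.map_ofFn] at h
  have h1 : (List.ofFn ((fun p => symX n p.1 ^ p.2) ∘ fun a => (a, ν a)))
      = List.ofFn fun a => symX n a ^ ν a := rfl
  have h2 : (List.ofFn (Prod.snd ∘ fun a => (a, ν a))).sum = ∑ a, ν a := by
    rw [List.sum_ofFn]; rfl
  have h3 : (List.ofFn ((fun p => Finsupp.single (embA n p.1) p.2) ∘ fun a => (a, ν a))).sum
      = ∑ a, Finsupp.single (embA n a) (ν a) := by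
    rw [List.sum_ofFn]; rfl
  rw [h1, h2, h3] at h
  rw [X_pow_eq_monomial, h, single_sub_single, Finsupp.single_eq_same, one_mul, Tm]

lemma sum_emb_eq_erase (g : Fin n → ℕ) :
    ∑ a : Fin (n - 1), g (embA n a) = ∑ b ∈ Finset.univ.erase (lastN n hn), g b := by
  apply Finset.sum_nbij' (i := fun a => embA n a)
    (j := fun b => (⟨n - 2 - b.val, by
      have := b.isLt
      omega⟩ : Fin (n - 1)))
  · intro a _
    simp [Finset.mem_erase, embA_ne_last hn a]
  · intro b hb
    simp
  · intro a _
    have := a.isLt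
    simp only [embA]
    ext
    simp
    omega
  · intro b hb
    simp only [Finset.mem_erase, Finset.mem_univ, and_true] at hb
    have hbv : b.val ≠ n - 1 := by
      intro h
      apply hb
      simp only [lastN, Fin.ne_iff_vne] at *
      exact Fin.eq_of_val_eq h
    have := b.isLt
    simp only [embA]
    ext
    simp
    omega
  · intro a _
    rfl

lemma sum_singles_apply' (ν : Fin (n - 1) → ℕ) (b : Fin n) :
    ((∑ a, Finsupp.single (embA n a) (ν a)) : Fin n →₀ ℕ) b
      = ∑ a, if embA n a = b then ν a else 0 := by
  rw [Finsupp.finset_sum_apply]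
  exact Finset.sum_congr rfl fun a _ => Finsupp.single_apply

lemma Tm_apply_emb (k : ℕ) (ν : Fin (n - 1) → ℕ) (a : Fin (n - 1)) :
    Tm n k hn ν (embA n a) = ν a := by
  rw [Tm, Finsupp.add_apply, Finsupp.single_apply,
    if_neg (fun h => embA_ne_last hn a h.symm), sum_singles_apply', zero_add]
  have : ∀ b : Fin (n - 1), (if embA n b = embA n a then ν b else 0)
      = if b = a then ν b else 0 := by
    intro b
    by_cases h : b = a
    · simp [h]
    · rw [if_neg (fun he => h (embA_inj he)), if_neg h]
  rw [Finset.sum_congr rfl fun b _ => this b, Finset.sum_ite_eq' Finset.univ a ν]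
  simp

lemma Tm_apply_last (k : ℕ) (ν : Fin (n - 1) → ℕ) :
    Tm n k hn ν (lastN n hn) = k - ∑ a, ν a := by
  rw [Tm, Finsupp.add_apply, Finsupp.single_eq_same, sum_singles_apply']
  rw [Finset.sum_eq_zero fun a _ => if_neg (embA_ne_last hn a), add_zero]

lemma Tm_inj (k : ℕ) : Function.Injective (Tm n k hn) := by
  intro ν ν' h
  funext a
  rw [← Tm_apply_emb hn k ν a, ← Tm_apply_emb hn k ν' a, h]

lemma degree_eq_sum_univ (d : Fin n →₀ ℕ) : d.degree = ∑ b, d b := by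
  rw [Finsupp.degree]
  exact Finset.sum_subset (Finset.subset_univ _)
    (fun b _ hb => Finsupp.notMem_support_iff.mp hb)

lemma Tm_degree (k : ℕ) (ν : Fin (n - 1) → ℕ) (h : ∑ a, ν a ≤ k) :
    (Tm n k hn ν).degree = k := by
  rw [degree_eq_sum_univ, ← Finset.sum_erase_add Finset.univ _
      (Finset.mem_univ (lastN n hn)), ← sum_emb_eq_erase hn, Tm_apply_last hn]
  rw [Finset.sum_congr rfl fun a _ => Tm_apply_emb hn k ν a]
  have hre : Finset.univ.sum ν = ∑ a, ν a := rfl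
  rw [hre]
  omega

lemma Tm_eq_of_degree (k : ℕ) (μ : Fin n →₀ ℕ) (hdeg : ∑ b, μ b = k) :
    Tm n k hn (fun a => μ (embA n a)) = μ := by
  have hsum : ∑ a, μ (embA n a) = k - μ (lastN n hn) := by
    rw [sum_emb_eq_erase hn, ← hdeg,
      ← Finset.sum_erase_add Finset.univ _ (Finset.mem_univ (lastN n hn))]
    omega
  ext b
  by_cases hb : b = lastN n hn
  · subst hb
    rw [Tm_apply_last hn, hsum]
    have : μ (lastN n hn) ≤ k := by
      rw [← hdeg]
      exact Finset.single_le_sum (fun _ _ => Nat.zero_le _) (Finset.mem_univ _)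
    omega
  · have hbv : b.val ≠ n - 1 := fun h => hb (Fin.eq_of_val_eq h)
    have hblt := b.isLt
    have hemb : embA n (⟨n - 2 - b.val, by omega⟩ : Fin (n - 1)) = b := by
      simp only [embA]
      ext
      simp
      omega
    rw [← hemb, Tm_apply_emb hn]

set_option maxHeartbeats 1000000
set_option synthInstance.maxHeartbeats 400000

/-- The commutative subalgebra generated by the `symX`. -/
instance symSubComm (n : ℕ) :
    CommRing (Algebra.adjoin ℂ (Set.range (symX n))) :=
  Algebra.adjoinCommRingOfComm ℂ (by
    rintro x ⟨a, rfl⟩ y ⟨b, rfl⟩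
    exact symX_comm a b)

def gX (n : ℕ) (a : Fin (n - 1)) : Algebra.adjoin ℂ (Set.range (symX n)) :=
  ⟨symX n a, Algebra.subset_adjoin ⟨a, rfl⟩⟩

lemma val_prod (ν : Fin (n - 1) → ℕ) :
    ((∏ a, gX n a ^ ν a : Algebra.adjoin ℂ (Set.range (symX n))) :
        Module.End ℂ (MvPolynomial (Fin n) ℂ))
      = (List.ofFn fun a => symX n a ^ ν a).prod := by
  rw [← List.prod_ofFn (f := fun a => gX n a ^ ν a),
    SubmonoidClass.coe_list_prod, List.map_ofFn]
  rfl

lemma symAct_eq_val_aeval (P : MvPolynomial (Fin (n - 1)) ℂ) :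
    symAct n P = ((aeval (gX n) P : Algebra.adjoin ℂ (Set.range (symX n))) :
      Module.End ℂ (MvPolynomial (Fin n) ℂ)) := by
  have hterm : ∀ (ν : Fin (n - 1) →₀ ℕ) (c : ℂ),
      ((aeval (gX n) (monomial ν c) : Algebra.adjoin ℂ (Set.range (symX n))) :
          Module.End ℂ (MvPolynomial (Fin n) ℂ))
        = c • (List.ofFn fun a => symX n a ^ ν a).prod := by
    intro ν c
    rw [aeval_monomial, Finsupp.prod,
      Finset.prod_subset (Finset.subset_univ ν.support)
        (fun a _ ha => by rw [Finsupp.notMem_support_iff.mp ha, pow_zero]),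
      ← Algebra.smul_def]
    rw [SetLike.val_smul, val_prod]
  conv_rhs => rw [as_sum P]
  rw [map_sum, AddSubmonoidClass.coe_finset_sum]
  unfold symAct
  exact Finset.sum_congr rfl fun ν _ => (hterm ν (P.coeff ν)).symm

lemma symAct_mul (P Q : MvPolynomial (Fin (n - 1)) ℂ) :
    symAct n (P * Q) = symAct n P * symAct n Q := by
  rw [symAct_eq_val_aeval, symAct_eq_val_aeval, symAct_eq_val_aeval, map_mul,
    MulMemClass.coe_mul]

lemma symAct_one : symAct n (1 : MvPolynomial (Fin (n - 1)) ℂ) = 1 := by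
  rw [symAct_eq_val_aeval, map_one, OneMemClass.coe_one]

lemma symAct_add (P Q : MvPolynomial (Fin (n - 1)) ℂ) :
    symAct n (P + Q) = symAct n P + symAct n Q := by
  rw [symAct_eq_val_aeval, symAct_eq_val_aeval, symAct_eq_val_aeval, map_add,
    AddMemClass.coe_add]

lemma symAct_smul (c : ℂ) (P : MvPolynomial (Fin (n - 1)) ℂ) :
    symAct n (c • P) = c • symAct n P := by
  rw [symAct_eq_val_aeval, symAct_eq_val_aeval, map_smul, SetLike.val_smul]


lemma symAct_apply_Xk (k : ℕ) (P : MvPolynomial (Fin (n - 1)) ℂ) :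
    symAct n P ((X (lastN n hn) : MvPolynomial (Fin n) ℂ) ^ k)
      = ∑ ν ∈ P.support,
          monomial (Tm n k hn ⇑ν) (P.coeff ν * (k.descFactorial (∑ a, ν a) : ℂ)) := by
  unfold symAct
  rw [LinearMap.sum_apply]
  refine Finset.sum_congr rfl fun ν _ => ?_
  rw [LinearMap.smul_apply, ofFn_prod_apply_Xk hn, smul_monomial, smul_eq_mul]

lemma coeff_symAct_Xk (k : ℕ) (P : MvPolynomial (Fin (n - 1)) ℂ) (ν₀ : Fin (n - 1) →₀ ℕ)
    (h : ν₀ ∈ P.support) :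
    coeff (Tm n k hn ⇑ν₀) (symAct n P ((X (lastN n hn) : MvPolynomial (Fin n) ℂ) ^ k))
      = P.coeff ν₀ * (k.descFactorial (∑ a, ν₀ a) : ℂ) := by
  rw [symAct_apply_Xk hn, coeff_sum]
  have hc : ∀ ν ∈ P.support,
      coeff (Tm n k hn ⇑ν₀)
          (monomial (Tm n k hn ⇑ν) (P.coeff ν * (k.descFactorial (∑ a, ν a) : ℂ)))
        = if ν = ν₀ then P.coeff ν * (k.descFactorial (∑ a, ν a) : ℂ) else 0 := by
    intro ν _
    rw [coeff_monomial]
    congr 1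
    simp only [eq_iff_iff]
    constructor
    · intro hEq
      exact DFunLike.coe_injective (Tm_inj hn k hEq)
    · intro hEq
      rw [hEq]
  rw [Finset.sum_congr rfl hc, Finset.sum_ite_eq' P.support ν₀, if_pos h]

/-- the module map `P ↦ P · w_k` as a `ℂ`-linear map. -/
def Phi (n k : ℕ) (hn : 2 ≤ n) :
    MvPolynomial (Fin (n - 1)) ℂ →ₗ[ℂ] MvPolynomial (Fin n) ℂ where
  toFun P := symAct n P ((X (lastN n hn) : MvPolynomial (Fin n) ℂ) ^ k)
  map_add' P Q := by
    show symAct n (P + Q) _ = _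
    rw [symAct_add, LinearMap.add_apply]
  map_smul' c P := by
    show symAct n (c • P) _ = _
    rw [symAct_smul, LinearMap.smul_apply]
    rfl

lemma Phi_mem_homogeneous (k : ℕ) (P : MvPolynomial (Fin (n - 1)) ℂ) :
    Phi n k hn P ∈ homogeneousSubmodule (Fin n) ℂ k := by
  show symAct n P _ ∈ _
  rw [symAct_apply_Xk hn]
  apply Submodule.sum_mem
  intro ν _
  by_cases h : ∑ a, ν a ≤ k
  · rw [mem_homogeneousSubmodule]
    exact isHomogeneous_monomial _ (Tm_degree hn k ⇑ν h)
  · have hD : (k.descFactorial (∑ a, ν a) : ℂ) = 0 := by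
      rw [Nat.descFactorial_eq_zero_iff_lt.mpr (by omega), Nat.cast_zero]
    rw [hD, mul_zero, map_zero]
    exact Submodule.zero_mem _

lemma homogeneous_le_range (k : ℕ) (f : MvPolynomial (Fin n) ℂ)
    (hf : f ∈ homogeneousSubmodule (Fin n) ℂ k) :
    ∃ P, Phi n k hn P = f := by
  rw [mem_homogeneousSubmodule] at hf
  have hmono : ∀ μ ∈ f.support, ∃ P, Phi n k hn P = monomial μ (f.coeff μ) := by
    intro μ hμ
    have hcoeff : f.coeff μ ≠ 0 := mem_support_iff.mp hμ
    have hdeg : ∑ b, μ b = k := by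
      rw [← degree_eq_sum_univ, Finsupp.degree_eq_weight_one]
      exact hf hcoeff
    have hsumle : ∑ a, μ (embA n a) ≤ k := by
      rw [sum_emb_eq_erase hn, ← hdeg,
        ← Finset.sum_erase_add Finset.univ _ (Finset.mem_univ (lastN n hn))]
      omega
    have hD : (k.descFactorial (∑ a, μ (embA n a)) : ℂ) ≠ 0 := by
      rw [Nat.cast_ne_zero]
      intro h0
      rw [Nat.descFactorial_eq_zero_iff_lt] at h0
      omega
    set ν₀ : Fin (n - 1) →₀ ℕ := Finsupp.equivFunOnFinite.symm (fun a => μ (embA n a)) with hν₀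
    have hν₀coe : ⇑ν₀ = fun a => μ (embA n a) := rfl
    have hc : f.coeff μ / (k.descFactorial (∑ a, μ (embA n a)) : ℂ) ≠ 0 :=
      div_ne_zero hcoeff hD
    refine ⟨monomial ν₀ (f.coeff μ / (k.descFactorial (∑ a, μ (embA n a)) : ℂ)), ?_⟩
    show symAct n _ _ = _
    rw [symAct_apply_Xk hn, support_monomial, if_neg hc, Finset.sum_singleton,
      coeff_monomial, if_pos rfl, hν₀coe]
    have hsub : (∑ a, μ (embA n a)) = ∑ a, (fun a => μ (embA n a)) a := rfl
    rw [Tm_eq_of_degree hn k μ hdeg, ← hsub, div_mul_cancel₀ _ hD]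
  have hmem : (∑ μ ∈ f.support, monomial μ (f.coeff μ)) ∈ LinearMap.range (Phi n k hn) :=
    Submodule.sum_mem _ fun μ hμ => by
      obtain ⟨P, hP⟩ := hmono μ hμ
      exact ⟨P, hP⟩
  rw [← as_sum f] at hmem
  exact hmem


lemma exists_le_sum {m : ℕ} (ν : Fin m → ℕ) (t : ℕ) (h : t ≤ ∑ a, ν a) :
    ∃ μ : Fin m → ℕ, (∀ a, μ a ≤ ν a) ∧ ∑ a, μ a = t := by
  induction t with
  | zero => exact ⟨fun _ => 0, fun a => Nat.zero_le _, by simp⟩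
  | succ t ih =>
      obtain ⟨μ, hle, hsum⟩ := ih (by omega)
      have hex : ∃ a, μ a < ν a := by
        by_contra hno
        push_neg at hno
        have : ∑ a, ν a ≤ ∑ a, μ a := Finset.sum_le_sum fun a _ => hno a
        omega
      obtain ⟨a, ha⟩ := hex
      refine ⟨Function.update μ a (μ a + 1), ?_, ?_⟩
      · intro b
        by_cases hb : b = a
        · subst hb; rw [Function.update_self]; omega
        · rw [Function.update_of_ne hb]; exact hle b
      · rw [Finset.sum_update_of_mem (Finset.mem_univ a), Finset.sdiff_singleton_eq_erase]
        rw [← Finset.add_sum_erase Finset.univ μ (Finset.mem_univ a)] at hsum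
        omega

lemma monomial_eq_prod_univ {m : ℕ} (s : Fin m →₀ ℕ) :
    (monomial s 1 : MvPolynomial (Fin m) ℂ) = ∏ a, X a ^ s a := by
  rw [← prod_X_pow_eq_monomial]
  apply Finset.prod_subset (Finset.subset_univ _)
  intro a _ ha
  rw [Finsupp.notMem_support_iff.mp ha, pow_zero]

lemma monomial_mem_Jtop (k : ℕ) (ν : Fin (n - 1) →₀ ℕ) (c : ℂ)
    (h : k + 1 ≤ ∑ a, ν a) : monomial ν c ∈ Jtop n k := by
  obtain ⟨μ, hle, hsum⟩ := exists_le_sum ⇑ν (k + 1) h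
  set μf : Fin (n - 1) →₀ ℕ := Finsupp.equivFunOnFinite.symm μ with hμf
  have hcoe : ⇑μf = μ := rfl
  have hgen : (monomial μf 1 : MvPolynomial (Fin (n - 1)) ℂ) ∈ Jtop n k := by
    apply Ideal.subset_span
    refine ⟨μ, hsum, ?_⟩
    rw [monomial_eq_prod_univ, hcoe]
  have hexp2 : ν - μf + μf = ν := by
    ext b
    have := hle b
    rw [← hcoe] at this
    simp only [Finsupp.add_apply, Finsupp.tsub_apply]
    omega
  have hsplit : (monomial ν c : MvPolynomial (Fin (n - 1)) ℂ)
      = monomial (ν - μf) c * monomial μf 1 := by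
    rw [monomial_mul, mul_one, hexp2]
  rw [hsplit]
  exact Ideal.mul_mem_left _ _ hgen

lemma Phi_ker_sub (k : ℕ) (P : MvPolynomial (Fin (n - 1)) ℂ)
    (h0 : Phi n k hn P = 0) : P ∈ Jtop n k := by
  have hbig : ∀ ν ∈ P.support, k + 1 ≤ ∑ a, ν a := by
    intro ν hν
    by_contra hlt
    have hD : (k.descFactorial (∑ a, ν a) : ℂ) ≠ 0 := by
      rw [Nat.cast_ne_zero]
      intro hz
      rw [Nat.descFactorial_eq_zero_iff_lt] at hz
      omega
    have := coeff_symAct_Xk hn k P ν hν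
    rw [show symAct n P ((X (lastN n hn) : MvPolynomial (Fin n) ℂ) ^ k) = Phi n k hn P
        from rfl, h0, coeff_zero] at this
    have hc : P.coeff ν = 0 := by
      rcases mul_eq_zero.mp this.symm with h | h
      · exact h
      · exact absurd h hD
    exact mem_support_iff.mp hν hc
  have : P = ∑ ν ∈ P.support, monomial ν (P.coeff ν) := as_sum P
  rw [this]
  exact Ideal.sum_mem _ fun ν hν => monomial_mem_Jtop k ν _ (hbig ν hν)

lemma Phi_ker_sup (k : ℕ) (P : MvPolynomial (Fin (n - 1)) ℂ)
    (hP : P ∈ Jtop n k) : Phi n k hn P = 0 := by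
  refine Submodule.span_induction ?_ ?_ ?_ ?_ hP
  · rintro u ⟨ν, hsum, rfl⟩
    set νf : Fin (n - 1) →₀ ℕ := Finsupp.equivFunOnFinite.symm ν with hνf
    have hcoe : ⇑νf = ν := rfl
    have : (∏ a, (X a : MvPolynomial (Fin (n - 1)) ℂ) ^ ν a) = monomial νf 1 := by
      rw [monomial_eq_prod_univ, hcoe]
    rw [this]
    show symAct n _ _ = 0
    rw [symAct_apply_Xk hn, support_monomial, if_neg one_ne_zero, Finset.sum_singleton]
    have hsum' : (∑ a, νf a) = k + 1 := hsum
    rw [hsum', Nat.descFactorial_eq_zero_iff_lt.mpr (by omega), Nat.cast_zero, mul_zero,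
      map_zero]
  · exact map_zero _
  · intro x y _ _ hx hy
    rw [map_add, hx, hy, add_zero]
  · intro r x _ hx
    rw [smul_eq_mul]
    show symAct n (r * x) _ = 0
    rw [symAct_mul, Module.End.mul_apply]
    have hx' : symAct n x ((X (lastN n hn) : MvPolynomial (Fin n) ℂ) ^ k) = 0 := hx
    rw [hx', map_zero]


end SymAux

open SymAux in
/-- the operators `x_a = e_{n-a,n}` on `W_k = S^k(ℂⁿ)` commute, the module
map `ℂ[x_1,…,x_{n-1}] → W_k`, `P ↦ P · w_k` (where `w_k = u_n^k` is the lowest weight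
vector) is surjective with kernel the ideal generated by the monomials of degree `k+1`;
hence `W_k ≅ V_k^{(n)}` as `ℂ[x_1,…,x_{n-1}]`-modules, with `w_k` the class of `1`. -/
theorem stmt1 (n k : ℕ) (hn : 2 ≤ n) :
    -- the operators commute
    (∀ a b : Fin (n - 1), symX n a * symX n b = symX n b * symX n a) ∧
    -- P ↦ symAct n P is multiplicative and unital (so P ↦ P · w_k is a module map)
    (∀ P Q : MvPolynomial (Fin (n - 1)) ℂ, symAct n (P * Q) = symAct n P * symAct n Q) ∧
    symAct n 1 = 1 ∧
    -- surjectivity onto W_k = S^k(ℂⁿ) (homogeneous polynomials of degree k)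
    (Set.range (fun P : MvPolynomial (Fin (n - 1)) ℂ =>
        symAct n P ((X (⟨n - 1, by omega⟩ : Fin n) : MvPolynomial (Fin n) ℂ) ^ k)) =
      (homogeneousSubmodule (Fin n) ℂ k : Set (MvPolynomial (Fin n) ℂ))) ∧
    -- the kernel is the ideal generated by the monomials of degree k+1
    ({P : MvPolynomial (Fin (n - 1)) ℂ |
        symAct n P ((X (⟨n - 1, by omega⟩ : Fin n) : MvPolynomial (Fin n) ℂ) ^ k) = 0} =
      (Jtop n k : Set (MvPolynomial (Fin (n - 1)) ℂ))) ∧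
    -- hence W_k ≅ V_k^{(n)}, with w_k corresponding to the class of 1
    ∃ e : (MvPolynomial (Fin (n - 1)) ℂ ⧸ Jtop n k) ≃ₗ[ℂ]
        homogeneousSubmodule (Fin n) ℂ k,
      ∀ P : MvPolynomial (Fin (n - 1)) ℂ,
        (e (Ideal.Quotient.mk (Jtop n k) P) : MvPolynomial (Fin n) ℂ) =
          symAct n P ((X (⟨n - 1, by omega⟩ : Fin n) : MvPolynomial (Fin n) ℂ) ^ k) := by
  refine ⟨symX_comm, symAct_mul, symAct_one, ?_, ?_, ?_⟩
  · ext f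
    simp only [Set.mem_range, SetLike.mem_coe]
    constructor
    · rintro ⟨P, rfl⟩
      exact Phi_mem_homogeneous hn k P
    · intro hf
      obtain ⟨P, hP⟩ := homogeneous_le_range hn k f hf
      exact ⟨P, hP⟩
  · ext P
    simp only [Set.mem_setOf_eq, SetLike.mem_coe]
    constructor
    · intro h
      exact Phi_ker_sub hn k P h
    · intro h
      exact Phi_ker_sup hn k P h
  · set K := Submodule.restrictScalars ℂ (Jtop n k) with hK
    set Φ' : MvPolynomial (Fin (n - 1)) ℂ →ₗ[ℂ] homogeneousSubmodule (Fin n) ℂ k :=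
      (Phi n k hn).codRestrict _ (Phi_mem_homogeneous hn k) with hΦ'
    have hKle : K ≤ LinearMap.ker Φ' := by
      intro x hx
      rw [LinearMap.mem_ker]
      exact Subtype.ext (Phi_ker_sup hn k x hx)
    set f := Submodule.liftQ K Φ' hKle with hf
    have hinj : Function.Injective f := by
      rw [← LinearMap.ker_eq_bot, Submodule.ker_liftQ_eq_bot]
      intro x hx
      rw [LinearMap.mem_ker] at hx
      exact Phi_ker_sub hn k x (congrArg Subtype.val hx)
    have hsurj : Function.Surjective f := by
      rintro ⟨g, hg⟩
      obtain ⟨P, hP⟩ := homogeneous_le_range hn k g hg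
      refine ⟨Submodule.Quotient.mk P, ?_⟩
      apply Subtype.ext
      rw [hf, Submodule.liftQ_apply]
      exact hP
    refine ⟨(Submodule.Quotient.restrictScalarsEquiv ℂ (Jtop n k)).symm.trans
      (LinearEquiv.ofBijective f ⟨hinj, hsurj⟩), ?_⟩
    intro P
    rw [← Ideal.Quotient.mk_eq_mk, LinearEquiv.trans_apply,
      Submodule.Quotient.restrictScalarsEquiv_symm_mk]
    have : (LinearEquiv.ofBijective f ⟨hinj, hsurj⟩) (Submodule.Quotient.mk P)
        = Φ' P := by
      show f (Submodule.Quotient.mk P) = Φ' P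
      rw [hf, Submodule.liftQ_apply]
    rw [this]
    rfl

end
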